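/- Let A₁ and A₂ be regular wiretap sets. Then Cl(A₁) ≺ Cl(A₂) if and only if A₁' ≺ A₂' for every A₁' ∈ Cl(A₁) and every A₂' ∈ Cl(A₂). -/

import Mathlib

open Finset

/-- Consecutive edges in the list match head-to-tail. -/
def EChain {V E : Type*} (tl hd : E → V) (p : List E) : Prop :=
  p.Chain' (fun d e => hd d = tl e)

/-- A (nonempty) directed path of edges starting at node `s`. -/
def PathFrom {V E : Type*} (tl hd : E → V) (s : V) (p : List E) : Prop :=
  p ≠ [] ∧ EChain tl hd p ∧ ∀ e ∈ p.head?, tl e = s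

/-- The directed graph is acyclic: no nonempty edge-chain returns to its start. -/
def Acyclic {V E : Type*} (tl hd : E → V) : Prop :=
  ∀ p : List E, p ≠ [] → EChain tl hd p →
    ∀ d ∈ p.head?, ∀ e ∈ p.getLast?, hd e ≠ tl d

/-- `B` separates the edge set `A` from `s`: every directed path from `s`
ending with an edge of `A` passes through an edge of `B` (i.e. `B` is a cut
between `s` and `A`). -/
def Separates {V E : Type*} (tl hd : E → V) (s : V) (A B : Finset E) : Prop :=
  ∀ p : List E, PathFrom tl hd s p → (∃ e ∈ p.getLast?, e ∈ A) → ∃ b ∈ B, b ∈ p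

/-- The minimum cut capacity between `s` and the edge set `A`. -/
noncomputable def mincut {V E : Type*} [Fintype E] (tl hd : E → V) (s : V)
    (A : Finset E) : ℕ :=
  sInf {n | ∃ B : Finset E, Separates tl hd s A B ∧ B.card = n}

/-- `B` is a minimum cut between `s` and the edge set `A`. -/
def IsMinCut {V E : Type*} [Fintype E] (tl hd : E → V) (s : V) (A B : Finset E) : Prop :=
  Separates tl hd s A B ∧ B.card = mincut tl hd s A

/-- An edge set is regular if its cardinality equals its minimum cut capacity from `s`. -/
def Regular {V E : Type*} [Fintype E] (tl hd : E → V) (s : V) (A : Finset E) : Prop :=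
  A.card = mincut tl hd s A

/-- `A ∼ A'`: the two edge sets have a common minimum cut from `s`. -/
def EquivSets {V E : Type*} [Fintype E] (tl hd : E → V) (s : V) (A A' : Finset E) : Prop :=
  ∃ C : Finset E, IsMinCut tl hd s A C ∧ IsMinCut tl hd s A' C

/-- `A₁ ≺ A₂`: `|A₁| < |A₂|` and some minimum cut between `s` and `A₂`
also separates `A₁` from `s`. -/
def Dominates {V E : Type*} [Fintype E] (tl hd : E → V) (s : V) (A₁ A₂ : Finset E) : Prop :=
  A₁.card < A₂.card ∧
    ∃ C : Finset E, IsMinCut tl hd s A₂ C ∧ Separates tl hd s A₁ C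

/-- A directed path of edges from node `s` to node `t`. -/
def NPathFromTo {V E : Type*} (tl hd : E → V) (s t : V) (p : List E) : Prop :=
  PathFrom tl hd s p ∧ ∀ e ∈ p.getLast?, hd e = t

/-- `B` is a cut between the nodes `s` and `t`. -/
def NSeparates {V E : Type*} (tl hd : E → V) (s t : V) (B : Finset E) : Prop :=
  ∀ p : List E, NPathFromTo tl hd s t p → ∃ b ∈ B, b ∈ p

/-- The minimum cut capacity between the nodes `s` and `t`. -/
noncomputable def nmincut {V E : Type*} [Fintype E] (tl hd : E → V) (s t : V) : ℕ :=
  sInf {n | ∃ B : Finset E, NSeparates tl hd s t B ∧ B.card = n}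

/-- `B` is a minimum cut between the nodes `s` and `t`. -/
def IsNodeMinCut {V E : Type*} [Fintype E] (tl hd : E → V) (s t : V) (B : Finset E) : Prop :=
  NSeparates tl hd s t B ∧ B.card = nmincut tl hd s t

/-- `d ≤ e` for edges: there is a directed path starting with `d` and ending with `e`
(in particular `d ≤ d`). -/
def EdgeLe {V E : Type*} (tl hd : E → V) (d e : E) : Prop :=
  ∃ p : List E, EChain tl hd p ∧ p.head? = some d ∧ p.getLast? = some e

/-- A family of pairwise edge-disjoint paths. -/
def EdgeDisjoint {E : Type*} {n : ℕ} (P : Fin n → List E) : Prop :=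
  ∀ i j, i ≠ j → List.Disjoint (P i) (P j)

/-- The primary minimum cut between nodes `s` and `t`: a minimum cut separating
every minimum cut between `s` and `t` from `s`. -/
def IsPrimaryNodeMinCut {V E : Type*} [Fintype E] (tl hd : E → V) (s t : V)
    (C : Finset E) : Prop :=
  IsNodeMinCut tl hd s t C ∧
    ∀ C' : Finset E, IsNodeMinCut tl hd s t C' → Separates tl hd s C' C

/-- The primary minimum cut between `s` and an edge set `A`. -/
def IsPrimaryMinCut {V E : Type*} [Fintype E] (tl hd : E → V) (s : V)
    (A C : Finset E) : Prop :=
  IsMinCut tl hd s A C ∧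
    ∀ C' : Finset E, IsMinCut tl hd s A C' → Separates tl hd s C' C

/-- The equivalence class (within the collection `𝒜`) of the wiretap set `A`
under the relation `∼`. -/
def ClassOf {V E : Type*} [Fintype E] (tl hd : E → V) (s : V)
    (𝒜 : Finset (Finset E)) (A : Finset E) : Set (Finset E) :=
  {A' | A' ∈ 𝒜 ∧ EquivSets tl hd s A A'}

/-- Domination amongst (distinct) equivalence classes: some common minimum cut of all
the sets in `C₂` separates every set in `C₁` from `s`. -/
def ClDominates {V E : Type*} [Fintype E] (tl hd : E → V) (s : V)
    (C₁ C₂ : Set (Finset E)) : Prop :=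
  C₁ ≠ C₂ ∧ ∃ CUT : Finset E,
    (∀ A ∈ C₂, IsMinCut tl hd s A CUT) ∧ (∀ A ∈ C₁, Separates tl hd s A CUT)

section AuxLemmas

variable {V E : Type*}

/-- The edge cut determined by a vertex set `S` (with target edge set `A`). -/
noncomputable def cutSet [Fintype E] (tl hd : E → V) (A : Finset E) (S : Set V) : Finset E :=
  @Finset.filter _ (fun e => tl e ∈ S ∧ (hd e ∉ S ∨ e ∈ A)) (Classical.decPred _) Finset.univ

lemma mem_cutSet [Fintype E] {tl hd : E → V} {A : Finset E} {S : Set V} {e : E} :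
    e ∈ cutSet tl hd A S ↔ tl e ∈ S ∧ (hd e ∉ S ∨ e ∈ A) := by
  simp [cutSet]

/-- The source side of a cut `C`: vertices reachable from `s` avoiding `C`. -/
def srcSide (tl hd : E → V) (s : V) (C : Finset E) : Set V :=
  {v | v = s ∨ ∃ p : List E, PathFrom tl hd s p ∧ (∀ f ∈ p, f ∉ C) ∧
    ∃ e ∈ p.getLast?, hd e = v}

lemma s_mem_srcSide {tl hd : E → V} {s : V} {C : Finset E} : s ∈ srcSide tl hd s C :=
  Or.inl rfl

lemma sep_univ [Fintype E] (tl hd : E → V) (s : V) (A : Finset E) :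
    Separates tl hd s A (Finset.univ : Finset E) := by
  rintro p hp ⟨e, he, -⟩
  exact ⟨e, Finset.mem_univ e, List.mem_of_mem_getLast? he⟩

lemma exists_isMinCut [Fintype E] (tl hd : E → V) (s : V) (A : Finset E) :
    ∃ B, IsMinCut tl hd s A B := by
  have h : {n | ∃ B : Finset E, Separates tl hd s A B ∧ B.card = n}.Nonempty :=
    ⟨(Finset.univ : Finset E).card, Finset.univ, sep_univ tl hd s A, rfl⟩
  obtain ⟨B, hB, hcard⟩ := Nat.sInf_mem h
  exact ⟨B, hB, hcard⟩

lemma mincut_le_of_separates [Fintype E] {tl hd : E → V} {s : V} {A B : Finset E}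
    (h : Separates tl hd s A B) : mincut tl hd s A ≤ B.card :=
  Nat.sInf_le ⟨B, h, rfl⟩

lemma separates_trans [Fintype E] {tl hd : E → V} {s : V} {A C B : Finset E}
    (h1 : Separates tl hd s A C) (h2 : Separates tl hd s C B) :
    Separates tl hd s A B := by
  intro p hp hlast
  obtain ⟨c, hcC, hcp⟩ := h1 p hp hlast
  obtain ⟨q, r, rfl⟩ := List.append_of_mem hcp
  have hpre : PathFrom tl hd s (q ++ [c]) := by
    obtain ⟨hne, hch, hhd⟩ := hp
    refine ⟨by simp, hch.prefix ⟨r, by simp⟩, ?_⟩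
    intro e he
    apply hhd
    rcases q with _ | ⟨x, q'⟩
    · simpa using he
    · simpa using he
  obtain ⟨b, hbB, hbp⟩ := h2 (q ++ [c]) hpre ⟨c, by simp [List.getLast?_concat], hcC⟩
  refine ⟨b, hbB, ?_⟩
  rcases List.mem_append.1 hbp with h | h
  · exact List.mem_append.2 (Or.inl h)
  · simp at h
    subst h
    exact List.mem_append.2 (Or.inr List.mem_cons_self)

lemma walk_in [Fintype E] (tl hd : E → V) (A : Finset E) (S : Set V) :
    ∀ p : List E, EChain tl hd p → (∀ e ∈ p.head?, tl e ∈ S) →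
      (∀ e ∈ p, e ∉ cutSet tl hd A S) →
      ∀ e ∈ p, tl e ∈ S ∧ hd e ∈ S ∧ e ∉ A := by
  intro p
  induction p with
  | nil => intro _ _ _ e he; simp at he
  | cons a l ih =>
    intro hch hhd hnc e he
    have htl : tl a ∈ S := hhd a rfl
    have hna := hnc a List.mem_cons_self
    rw [mem_cutSet] at hna
    push_neg at hna
    obtain ⟨hhda, hnA⟩ := hna htl
    obtain ⟨hlink, hch2⟩ := List.isChain_cons.1 hch
    have ih' := ih hch2 (fun f hf => by rw [← hlink f hf]; exact hhda)
      (fun f hf => hnc f (List.mem_cons_of_mem a hf))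
    rcases List.mem_cons.1 he with rfl | he'
    · exact ⟨htl, hhda, hnA⟩
    · exact ih' e he'

lemma cutSet_separates [Fintype E] (tl hd : E → V) (s : V) {A : Finset E} {S : Set V}
    (hs : s ∈ S) : Separates tl hd s A (cutSet tl hd A S) := by
  intro p hp hlast
  by_contra hcon
  push_neg at hcon
  obtain ⟨e, he, heA⟩ := hlast
  obtain ⟨hne, hch, hhd⟩ := hp
  have hw := walk_in tl hd A S p hch (fun f hf => by rw [hhd f hf]; exact hs)
    (fun f hf hfc => hcon f hfc hf)
  exact (hw e (List.mem_of_mem_getLast? he)).2.2 heA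

lemma pathFrom_snoc {tl hd : E → V} {s : V} {p : List E} {e : E}
    (hp : PathFrom tl hd s p) (hlink : ∀ f ∈ p.getLast?, hd f = tl e) :
    PathFrom tl hd s (p ++ [e]) := by
  obtain ⟨hne, hch, hhd⟩ := hp
  refine ⟨by simp, List.isChain_append.2 ⟨hch, List.isChain_singleton e, ?_⟩, ?_⟩
  · intro x hx y hy
    simp at hy
    subst hy
    exact hlink x hx
  · intro f hf
    apply hhd
    rcases p with _ | ⟨x, q⟩
    · exact absurd rfl hne
    · simpa using hf

lemma cutSet_srcSide_subset [Fintype E] {tl hd : E → V} {s : V} {A C : Finset E}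
    (h : Separates tl hd s A C) :
    cutSet tl hd A (srcSide tl hd s C) ⊆ C := by
  intro e he
  rw [mem_cutSet] at he
  obtain ⟨htl, hcond⟩ := he
  -- build a path from s ending with e, avoiding C except possibly at e
  have hpath : ∃ p : List E, PathFrom tl hd s p ∧ (∀ f ∈ p, f = e ∨ f ∉ C) ∧
      p.getLast? = some e := by
    rcases htl with hts | ⟨q, hq, hqav, f, hf, hfv⟩
    · exact ⟨[e], ⟨by simp, List.isChain_singleton e, by simpa using hts⟩,
        by simp, rfl⟩
    · rw [Option.mem_def] at hf
      refine ⟨q ++ [e], pathFrom_snoc hq ?_, ?_, List.getLast?_concat⟩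
      · intro g hg
        rw [Option.mem_def, hf] at hg
        injection hg with hg
        subst hg
        exact hfv
      · intro g hg
        rcases List.mem_append.1 hg with hg | hg
        · exact Or.inr (hqav g hg)
        · simp at hg; exact Or.inl hg
  obtain ⟨p, hp, hav, hlast⟩ := hpath
  rcases hcond with hhd | heA
  · -- hd e ∉ srcSide: if e ∉ C the path witnesses hd e ∈ srcSide
    by_contra heC
    apply hhd
    refine Or.inr ⟨p, hp, ?_, e, by rw [Option.mem_def, hlast], rfl⟩
    intro f hf
    rcases hav f hf with rfl | hfn
    · exact heC
    · exact hfn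
  · -- e ∈ A: the path reaches A, so it meets C; but it avoids C except at e
    obtain ⟨b, hbC, hbp⟩ := h p hp ⟨e, by rw [Option.mem_def, hlast], heA⟩
    rcases hav b hbp with rfl | hbn
    · exact hbC
    · exact absurd hbC hbn

lemma minCut_eq_cutSet [Fintype E] {tl hd : E → V} {s : V} {A C : Finset E}
    (h : IsMinCut tl hd s A C) :
    C = cutSet tl hd A (srcSide tl hd s C) := by
  have hsub := cutSet_srcSide_subset h.1
  have hcut := cutSet_separates tl hd s (A := A) (S := srcSide tl hd s C) s_mem_srcSide
  have hge := mincut_le_of_separates hcut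
  exact (Finset.eq_of_subset_of_card_le hsub (by rw [h.2]; exact hge)).symm

lemma separates_cutSet_of_subset [Fintype E] {tl hd : E → V} {s : V} {A C : Finset E}
    {S T : Set V} (hC : ∀ e ∈ C, tl e ∈ S ∧ (hd e ∉ S ∨ e ∈ A)) (hT : T ⊆ S)
    (hs : s ∈ T) :
    Separates tl hd s C (cutSet tl hd A T) := by
  intro p hp hlast
  by_contra hcon
  push_neg at hcon
  obtain ⟨e, he, heC⟩ := hlast
  obtain ⟨hne, hch, hhd⟩ := hp
  have hw := walk_in tl hd A T p hch (fun f hf => by rw [hhd f hf]; exact hs)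
    (fun f hf hfc => hcon f hfc hf)
  obtain ⟨-, hhdT, hnA⟩ := hw e (List.mem_of_mem_getLast? he)
  rcases (hC e heC).2 with hns | hA
  · exact hns (hT hhdT)
  · exact hnA hA

lemma meet_lemma [Fintype E] {tl hd : E → V} {s : V} {A C C' : Finset E}
    (hC : IsMinCut tl hd s A C) (hC' : IsMinCut tl hd s A C') :
    ∃ D, IsMinCut tl hd s A D ∧ Separates tl hd s C D ∧ Separates tl hd s C' D := by
  classical
  set S := srcSide tl hd s C with hS
  set S' := srcSide tl hd s C' with hS'
  have hrep : C = cutSet tl hd A S := minCut_eq_cutSet hC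
  have hrep' : C' = cutSet tl hd A S' := minCut_eq_cutSet hC'
  have hcutI : Separates tl hd s A (cutSet tl hd A (S ∩ S')) :=
    cutSet_separates tl hd s ⟨s_mem_srcSide, s_mem_srcSide⟩
  have hcutU : Separates tl hd s A (cutSet tl hd A (S ∪ S')) :=
    cutSet_separates tl hd s (Or.inl s_mem_srcSide)
  have hI := mincut_le_of_separates hcutI
  have hU := mincut_le_of_separates hcutU
  have h1 : cutSet tl hd A (S ∩ S') ∪ cutSet tl hd A (S ∪ S') ⊆
      cutSet tl hd A S ∪ cutSet tl hd A S' := by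
    intro e he
    simp only [Finset.mem_union, mem_cutSet, Set.mem_inter_iff, Set.mem_union] at he ⊢
    tauto
  have h2 : cutSet tl hd A (S ∩ S') ∩ cutSet tl hd A (S ∪ S') ⊆
      cutSet tl hd A S ∩ cutSet tl hd A S' := by
    intro e he
    simp only [Finset.mem_inter, mem_cutSet, Set.mem_inter_iff, Set.mem_union] at he ⊢
    tauto
  have hsubmod : (cutSet tl hd A (S ∩ S')).card + (cutSet tl hd A (S ∪ S')).card ≤
      C.card + C'.card := by
    rw [hrep, hrep']
    calc (cutSet tl hd A (S ∩ S')).card + (cutSet tl hd A (S ∪ S')).card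
        = (cutSet tl hd A (S ∩ S') ∪ cutSet tl hd A (S ∪ S')).card +
          (cutSet tl hd A (S ∩ S') ∩ cutSet tl hd A (S ∪ S')).card :=
          (Finset.card_union_add_card_inter _ _).symm
      _ ≤ (cutSet tl hd A S ∪ cutSet tl hd A S').card +
          (cutSet tl hd A S ∩ cutSet tl hd A S').card :=
          add_le_add (Finset.card_le_card h1) (Finset.card_le_card h2)
      _ = (cutSet tl hd A S).card + (cutSet tl hd A S').card :=
          Finset.card_union_add_card_inter _ _
  have hIcard : (cutSet tl hd A (S ∩ S')).card = mincut tl hd s A := by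
    have hc1 := hC.2
    have hc2 := hC'.2
    omega
  refine ⟨cutSet tl hd A (S ∩ S'), ⟨hcutI, hIcard⟩, ?_, ?_⟩
  · refine separates_cutSet_of_subset (fun e he => ?_) Set.inter_subset_left ⟨s_mem_srcSide, s_mem_srcSide⟩
    rw [hrep, mem_cutSet] at he
    exact he
  · refine separates_cutSet_of_subset (fun e he => ?_) Set.inter_subset_right ⟨s_mem_srcSide, s_mem_srcSide⟩
    rw [hrep', mem_cutSet] at he
    exact he

lemma exists_common_meet [Fintype E] (tl hd : E → V) (s : V) (A : Finset E) :
    ∀ 𝒞 : Finset (Finset E), (∀ C ∈ 𝒞, IsMinCut tl hd s A C) →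
      ∃ D, IsMinCut tl hd s A D ∧ ∀ C ∈ 𝒞, Separates tl hd s C D := by
  classical
  intro 𝒞
  induction 𝒞 using Finset.induction_on with
  | empty =>
    intro _
    obtain ⟨B, hB⟩ := exists_isMinCut tl hd s A
    exact ⟨B, hB, by simp⟩
  | @insert a 𝒞 hnotmem ih =>
    intro hall
    obtain ⟨D, hD, hDs⟩ := ih (fun C hC => hall C (Finset.mem_insert_of_mem hC))
    obtain ⟨D', hD', hs1, hs2⟩ := meet_lemma (hall a (Finset.mem_insert_self _ _)) hD
    refine ⟨D', hD', fun C hC => ?_⟩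
    rcases Finset.mem_insert.1 hC with rfl | hC'
    · exact hs1
    · exact separates_trans (hDs C hC') hs2

lemma exists_primary [Fintype E] (tl hd : E → V) (s : V) (A : Finset E) :
    ∃ D, IsMinCut tl hd s A D ∧ ∀ C, IsMinCut tl hd s A C → Separates tl hd s C D := by
  classical
  obtain ⟨D, hD, h⟩ := exists_common_meet tl hd s A
    (Finset.univ.filter (fun C => IsMinCut tl hd s A C))
    (fun C hC => (Finset.mem_filter.1 hC).2)
  exact ⟨D, hD, fun C hC => h C (Finset.mem_filter.2 ⟨Finset.mem_univ C, hC⟩)⟩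

end AuxLemmas

/-- `Cl(A₁) ≺ Cl(A₂)` iff `A₁' ≺ A₂'` for all `A₁' ∈ Cl(A₁)` and
`A₂' ∈ Cl(A₂)`. -/
theorem clDominates_iff_forall_dominates {V E : Type*} [Fintype E]
    (tl hd : E → V) (s : V)
    (hacy : Acyclic tl hd) (hsrc : ∀ e : E, hd e ≠ s)
    (𝒜 : Finset (Finset E)) (hreg : ∀ A ∈ 𝒜, Regular tl hd s A)
    (A₁ A₂ : Finset E) (hA₁ : A₁ ∈ 𝒜) (hA₂ : A₂ ∈ 𝒜) :
    ClDominates tl hd s (ClassOf tl hd s 𝒜 A₁) (ClassOf tl hd s 𝒜 A₂) ↔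
      (∀ A₁' ∈ ClassOf tl hd s 𝒜 A₁, ∀ A₂' ∈ ClassOf tl hd s 𝒜 A₂,
        Dominates tl hd s A₁' A₂') := by
  classical
  have refl1 : A₁ ∈ ClassOf tl hd s 𝒜 A₁ := by
    obtain ⟨B, hB⟩ := exists_isMinCut tl hd s A₁
    exact ⟨hA₁, B, hB, hB⟩
  have refl2 : A₂ ∈ ClassOf tl hd s 𝒜 A₂ := by
    obtain ⟨B, hB⟩ := exists_isMinCut tl hd s A₂
    exact ⟨hA₂, B, hB, hB⟩
  constructor
  · rintro ⟨hne, CUT, hmc, hsep⟩ A₁' hA₁' A₂' hA₂'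
    have hsep1 := hsep A₁' hA₁'
    have hmc2 := hmc A₂' hA₂'
    refine ⟨?_, CUT, hmc2, hsep1⟩
    have hcard2 : A₂'.card = CUT.card := by
      rw [hreg A₂' hA₂'.1, ← hmc2.2]
    have hle : A₁'.card ≤ CUT.card := by
      rw [hreg A₁' hA₁'.1]
      exact mincut_le_of_separates hsep1
    rw [hcard2]
    rcases lt_or_eq_of_le hle with hlt | heq
    · exact hlt
    exfalso
    have key : ∀ Y ∈ ClassOf tl hd s 𝒜 A₁, IsMinCut tl hd s Y CUT := by
      intro Y hY
      have h1 : mincut tl hd s Y = mincut tl hd s A₁ := by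
        obtain ⟨-, D, hD1, hD2⟩ := hY
        rw [← hD2.2, hD1.2]
      have h1' : mincut tl hd s A₁' = mincut tl hd s A₁ := by
        obtain ⟨-, D, hD1, hD2⟩ := hA₁'
        rw [← hD2.2, hD1.2]
      refine ⟨hsep Y hY, ?_⟩
      rw [h1, ← h1', ← hreg A₁' hA₁'.1]
      exact heq.symm
    apply hne
    ext X
    constructor
    · intro hX
      exact ⟨hX.1, CUT, hmc A₂ refl2, key X hX⟩
    · intro hX
      exact ⟨hX.1, CUT, key A₁ refl1, hmc X hX⟩
  · intro hdom
    have hne : ClassOf tl hd s 𝒜 A₁ ≠ ClassOf tl hd s 𝒜 A₂ := by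
      intro heq
      have h2 : A₂ ∈ ClassOf tl hd s 𝒜 A₁ := by rw [heq]; exact refl2
      exact lt_irrefl _ (hdom A₂ h2 A₂ refl2).1
    obtain ⟨CUT, hCUT, hprim⟩ := exists_primary tl hd s A₂
    refine ⟨hne, CUT, ?_, ?_⟩
    · intro X hX
      obtain ⟨hX𝒜, D, hD2, hDX⟩ := hX
      refine ⟨separates_trans hDX.1 (hprim D hD2), ?_⟩
      rw [hCUT.2, ← hD2.2]
      exact hDX.2
    · intro Y hY
      obtain ⟨C, hC2, hCY⟩ := (hdom Y hY A₂ refl2).2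
      exact separates_trans hCY (hprim C hC2)
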